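/- Let K be a finite field with q elements, where q ≡ 3 (mod 4) and q ≥ 7. Then there exist X, Y ∈ K such that X and Y are both nonzero squares in K, X + 1 is a nonzero square in K, and Y + 1 is a nonsquare in K; consequently (X + 1)·(Y + 1) is a nonsquare in K. -/

import Mathlib

theorem stmt_10 (q : ℕ) (hq_pp : IsPrimePow q) (hq3 : q % 4 = 3) (hq7 : 7 ≤ q)
    (K : Type*) [Field K] [Fintype K] (hK : Fintype.card K = q) :
    ∃ X Y : K,
      (X ≠ 0 ∧ ∃ w : K, X = w ^ 2) ∧             -- X is a nonzero square in K
      (Y ≠ 0 ∧ ∃ w : K, Y = w ^ 2) ∧             -- Y is a nonzero square in K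
      (X + 1 ≠ 0 ∧ ∃ w : K, X + 1 = w ^ 2) ∧     -- X + 1 is a nonzero square in K
      (∀ w : K, Y + 1 ≠ w ^ 2) ∧                 -- Y + 1 is a nonsquare in K
      (∀ w : K, (X + 1) * (Y + 1) ≠ w ^ 2) := by -- (X+1)(Y+1) is a nonsquare in K
  classical
  -- -1 is not a square in K
  have hneg : ¬ IsSquare (-1 : K) := by
    rw [FiniteField.isSquare_neg_one_iff, hK, hq3]
    simp
  have hneg' : ∀ w : K, (-1 : K) ≠ w ^ 2 := by
    intro w hw
    exact hneg ⟨w, by rw [hw]; ring⟩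
  -- 2 ≠ 0 in K
  have h2 : (2 : K) ≠ 0 := by
    intro h
    apply hneg ⟨1, by linear_combination -h⟩
  -- find t ∉ {0, 1, -1}
  have hcard : ({0, 1, -1} : Finset K).card < Fintype.card K := by
    calc ({0, 1, -1} : Finset K).card ≤ 3 := by
          apply le_trans (Finset.card_insert_le _ _)
          have := Finset.card_insert_le (1:K) ({-1} : Finset K)
          simp at this ⊢
          omega
        _ < Fintype.card K := by omega
  obtain ⟨t, ht⟩ : ∃ t : K, t ∉ ({0, 1, -1} : Finset K) := by
    by_contra hcon
    push_neg at hcon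
    have : (Finset.univ : Finset K) ⊆ ({0, 1, -1} : Finset K) :=
      fun x _ => hcon x
    have := Finset.card_le_card this
    rw [Finset.card_univ] at this
    omega
  simp only [Finset.mem_insert, Finset.mem_singleton, not_or] at ht
  obtain ⟨ht0, ht1, htm1⟩ := ht
  set w : K := (t⁻¹ - t) / 2 with hw
  set v : K := (t + t⁻¹) / 2 with hv
  have hvw : w ^ 2 + 1 = v ^ 2 := by
    rw [hw, hv]
    field_simp [hw, hv]
    ring
  have hwne : w ≠ 0 := by
    intro h
    rw [hw, div_eq_zero_iff, sub_eq_zero] at h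
    rcases h with h | h
    · have : t ^ 2 = 1 := by
        field_simp at h
        linear_combination -h
      have : (t - 1) * (t + 1) = 0 := by linear_combination this
      rcases mul_eq_zero.mp this with h' | h'
      · exact ht1 (by linear_combination h')
      · exact htm1 (by linear_combination h')
    · exact h2 h
  have hvne : v ≠ 0 := by
    intro h
    rw [hv, div_eq_zero_iff] at h
    rcases h with h | h
    · have ht2 : t ^ 2 = -1 := by
        have : t * t + 1 = 0 := by
          field_simp at h
          linear_combination h
        linear_combination this
      exact hneg' t ht2.symm
    · exact h2 h
  -- X := w ^ 2
  refine ⟨w ^ 2, ?_⟩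
  -- now find Y via the chain in the prime field
  set p := ringChar K with hp
  have hpp : p.Prime := CharP.char_is_prime K p
  have hp2 : p ≠ 2 := by
    intro h
    apply h2
    have : (p : K) = 0 := CharP.cast_eq_zero K p
    rw [h] at this
    exact_mod_cast this
  have hp3 : 3 ≤ p := by
    rcases hpp.two_le.lt_or_eq with h | h
    · omega
    · omega
  set P : ℕ → Prop := fun n => ((n : K) ≠ 0 ∧ ∃ u : K, (n : K) = u ^ 2) with hP
  have hP1 : P 1 := ⟨by simp, 1, by simp⟩
  have hPp : ¬ P (p - 1) := by
    intro ⟨_, u, hu⟩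
    apply hneg' u
    rw [← hu]
    have : ((p - 1 : ℕ) : K) = (p : K) - 1 := by
      push_cast [Nat.cast_sub (by omega : 1 ≤ p)]
      ring
    rw [this, CharP.cast_eq_zero K p]
    ring
  have hex : ∃ n, ¬ P (n + 1) := ⟨p - 2, by
    have : p - 2 + 1 = p - 1 := by omega
    rw [this]; exact hPp⟩
  set n₀ := Nat.find hex with hn₀
  have hspec : ¬ P (n₀ + 1) := Nat.find_spec hex
  have hn₀pos : 1 ≤ n₀ := by
    by_contra h
    push_neg at h
    interval_cases n₀
    exact hspec hP1
  have hPn₀ : P n₀ := by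
    by_contra h
    have := Nat.find_min hex (show n₀ - 1 < n₀ by omega)
    rw [show n₀ - 1 + 1 = n₀ by omega] at this
    exact this h
  obtain ⟨hYne, u, hu⟩ := hPn₀
  refine ⟨(n₀ : K), ⟨pow_ne_zero 2 hwne, w, rfl⟩, ⟨hYne, u, hu⟩, ?_, ?_, ?_⟩
  · exact ⟨by rw [hvw]; exact pow_ne_zero 2 hvne, v, hvw⟩
  · -- Y + 1 is not a square
    intro z hz
    apply hspec
    constructor
    · push_cast
      intro h0
      apply hneg' u
      rw [← hu]
      linear_combination -h0
    · exact ⟨z, by push_cast; exact hz⟩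
  · -- (X+1)(Y+1) not a square
    intro z hz
    rw [hvw] at hz
    have : ((n₀ : K) + 1) = (z / v) ^ 2 := by
      field_simp
      linear_combination hz
    -- reuse previous part
    apply hspec
    constructor
    · push_cast
      intro h0
      apply hneg' u
      rw [← hu]
      linear_combination -h0
    · exact ⟨z / v, by push_cast; exact this⟩
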